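/- Let M, N be natural numbers, let μ_0, …, μ_M ∈ (-1,1) be distinct and ω_0, …, ω_M > 0 satisfy Σ_{m=0}^{M} ω_m p(μ_m) = ∫_{-1}^{1} p(μ) dμ for every polynomial p of degree at most 2M+1. Let c > 0, let Σ_t : [-1,1] × [-1,1] → ℝ be continuous and Σ_s : [-1,1] × [-1,1] × [-1,1] → ℝ be continuous and nonnegative, and assume for all x ∈ [-1,1] and all 0 ≤ m, i ≤ M that Σ_t(x,μ_m) - (1/2) Σ_{i=0}^{M} ω_i Σ_s(x,μ_i,μ_m) ≥ c/2 and Σ_t(x,μ_i) - (1/2) Σ_{m=0}^{M} ω_m Σ_s(x,μ_i,μ_m) ≥ c/2. Let ψ(x,μ) = Σ_{j=0}^{M} c_j(x) μ^j, where each c_j is a real polynomial of degree at most N, and suppose ψ(-1,μ_m) = 0 whenever μ_m > 0 and ψ(1,μ_m) = 0 whenever μ_m < 0. If for every m with 0 ≤ m ≤ M and every polynomial v of degree at most N satisfying v(-1) = 0 when μ_m > 0 and v(1) = 0 when μ_m < 0 we have ∫_{-1}^{1} [ μ_m (∂_x ψ)(x,μ_m) + Σ_t(x,μ_m) ψ(x,μ_m)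 - (1/2) Σ_{i=0}^{M} ω_i Σ_s(x,μ_i,μ_m) ψ(x,μ_i) ] v(x) dx = 0, then ψ is identically zero on [-1,1] × [-1,1]. -/

import Mathlib

open MeasureTheory Polynomial Set


lemma fd_contOn_sum {ι : Type*} (s : Finset ι) (f : ι → ℝ → ℝ) (t : Set ℝ)
    (h : ∀ i ∈ s, ContinuousOn (f i) t) :
    ContinuousOn (fun y => ∑ i ∈ s, f i y) t := by
  classical
  induction s using Finset.induction_on with
  | empty => simpa using continuousOn_const
  | insert a s' hx ih =>
    simp only [Finset.sum_insert hx]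
    exact (h a (Finset.mem_insert_self a s')).add
      (ih fun i hi => h i (Finset.mem_insert_of_mem hi))

lemma fd_key {n : ℕ} (ω : Fin n → ℝ) (hω : ∀ m, 0 < ω m)
    (S : Fin n → Fin n → ℝ) (hS : ∀ i m, 0 ≤ S i m) (a : Fin n → ℝ) (c : ℝ)
    (h1 : ∀ m, c / 2 ≤ a m - (1 / 2) * ∑ i, ω i * S i m)
    (h2 : ∀ i, c / 2 ≤ a i - (1 / 2) * ∑ m, ω m * S i m)
    (s : Fin n → ℝ) :
    c / 2 * ∑ m, ω m * s m ^ 2 ≤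
      ∑ m, ω m * (a m * s m ^ 2 - (1 / 2) * ∑ i, ω i * S i m * s i * s m) := by
  have key : ∑ m, ω m * ((1 / 2) * ∑ i, ω i * S i m * s i * s m)
      ≤ ∑ m, ω m * s m ^ 2 * (a m - c / 2) := by
    have step1 : ∑ m, ω m * ((1 / 2) * ∑ i, ω i * S i m * s i * s m)
        = ∑ m, ∑ i, (1 / 2) * (ω m * (ω i * S i m)) * (s i * s m) := by
      refine Finset.sum_congr rfl fun m _ => ?_
      rw [Finset.mul_sum, Finset.mul_sum]
      exact Finset.sum_congr rfl fun i _ => by ring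
    have step2 : ∑ m, ∑ i, (1 / 2) * (ω m * (ω i * S i m)) * (s i * s m)
        ≤ ∑ m, ∑ i, ((1 / 4) * (ω m * S i m * (ω i * s i ^ 2))
            + (1 / 4) * (ω i * S i m * (ω m * s m ^ 2))) := by
      refine Finset.sum_le_sum fun m _ => Finset.sum_le_sum fun i _ => ?_
      have h0 : 0 ≤ ω m * (ω i * S i m) :=
        mul_nonneg (hω m).le (mul_nonneg (hω i).le (hS i m))
      nlinarith [sq_nonneg (s i - s m), sq_nonneg (s i + s m)]
    have step3 : ∑ m, ∑ i, ((1 / 4) * (ω m * S i m * (ω i * s i ^ 2))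
            + (1 / 4) * (ω i * S i m * (ω m * s m ^ 2)))
        = (∑ i, (1 / 4) * (ω i * s i ^ 2) * (∑ m, ω m * S i m))
          + ∑ m, (1 / 4) * (ω m * s m ^ 2) * (∑ i, ω i * S i m) := by
      simp_rw [Finset.sum_add_distrib]
      congr 1
      · rw [Finset.sum_comm]
        refine Finset.sum_congr rfl fun i _ => ?_
        rw [Finset.mul_sum]
        exact Finset.sum_congr rfl fun m _ => by ring
      · refine Finset.sum_congr rfl fun m _ => ?_
        rw [Finset.mul_sum]
        exact Finset.sum_congr rfl fun i _ => by ring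
    have b1 : (∑ i, (1 / 4) * (ω i * s i ^ 2) * (∑ m, ω m * S i m))
        ≤ ∑ i, (1 / 4) * (ω i * s i ^ 2) * (2 * (a i - c / 2)) := by
      refine Finset.sum_le_sum fun i _ => ?_
      have hnn : 0 ≤ (1 / 4 : ℝ) * (ω i * s i ^ 2) :=
        mul_nonneg (by norm_num) (mul_nonneg (hω i).le (sq_nonneg _))
      have := h2 i
      apply mul_le_mul_of_nonneg_left _ hnn
      linarith
    have b2 : (∑ m, (1 / 4) * (ω m * s m ^ 2) * (∑ i, ω i * S i m))
        ≤ ∑ m, (1 / 4) * (ω m * s m ^ 2) * (2 * (a m - c / 2)) := by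
      refine Finset.sum_le_sum fun m _ => ?_
      have hnn : 0 ≤ (1 / 4 : ℝ) * (ω m * s m ^ 2) :=
        mul_nonneg (by norm_num) (mul_nonneg (hω m).le (sq_nonneg _))
      have := h1 m
      apply mul_le_mul_of_nonneg_left _ hnn
      linarith
    have e4 : (∑ i, (1 / 4) * (ω i * s i ^ 2) * (2 * (a i - c / 2)))
        + (∑ m, (1 / 4) * (ω m * s m ^ 2) * (2 * (a m - c / 2)))
        = ∑ m, ω m * s m ^ 2 * (a m - c / 2) := by
      rw [← Finset.sum_add_distrib]
      exact Finset.sum_congr rfl fun m _ => by ring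
    calc ∑ m, ω m * ((1 / 2) * ∑ i, ω i * S i m * s i * s m)
        = ∑ m, ∑ i, (1 / 2) * (ω m * (ω i * S i m)) * (s i * s m) := step1
      _ ≤ _ := step2
      _ = _ := step3
      _ ≤ (∑ i, (1 / 4) * (ω i * s i ^ 2) * (2 * (a i - c / 2)))
            + (∑ m, (1 / 4) * (ω m * s m ^ 2) * (2 * (a m - c / 2))) := add_le_add b1 b2
      _ = ∑ m, ω m * s m ^ 2 * (a m - c / 2) := e4
  have e5 : ∑ m, ω m * (a m * s m ^ 2 - (1 / 2) * ∑ i, ω i * S i m * s i * s m)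
      = (∑ m, ω m * (a m * s m ^ 2)) - ∑ m, ω m * ((1 / 2) * ∑ i, ω i * S i m * s i * s m) := by
    rw [← Finset.sum_sub_distrib]
    exact Finset.sum_congr rfl fun m _ => by ring
  have e6 : ∑ m, ω m * s m ^ 2 * (a m - c / 2)
      = (∑ m, ω m * (a m * s m ^ 2)) - c / 2 * ∑ m, ω m * s m ^ 2 := by
    rw [Finset.mul_sum, ← Finset.sum_sub_distrib]
    exact Finset.sum_congr rfl fun m _ => by ring
  rw [e5]
  linarith [key, e6.symm.le]

lemma fd_poly_eq_zero (p : Polynomial ℝ) (h : ∫ x in (-1:ℝ)..1, (p.eval x) ^ 2 = 0) :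
    p = 0 := by
  by_contra hp
  rw [intervalIntegral.integral_of_le (by norm_num : (-1:ℝ) ≤ 1)] at h
  have hcont : Continuous fun x : ℝ => (p.eval x) ^ 2 := (p.continuous).pow 2
  have hint : IntegrableOn (fun x : ℝ => (p.eval x) ^ 2) (Ioc (-1:ℝ) 1) :=
    hcont.integrableOn_Ioc
  have h0 : (fun x : ℝ => (p.eval x) ^ 2) =ᵐ[volume.restrict (Ioc (-1:ℝ) 1)] 0 :=
    (integral_eq_zero_iff_of_nonneg (fun x => sq_nonneg _) hint).mp h
  have hm : MeasurableSet {x : ℝ | ¬ (p.eval x) ^ 2 = 0} :=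
    (isOpen_compl_singleton.preimage hcont).measurableSet
  have hmeas0 : volume ({x : ℝ | ¬ (p.eval x) ^ 2 = 0} ∩ Ioc (-1:ℝ) 1) = 0 := by
    have h1 := MeasureTheory.ae_iff.mp h0
    simp only [Pi.zero_apply] at h1
    rwa [Measure.restrict_apply hm] at h1
  have hroots : volume {x : ℝ | p.IsRoot x} = 0 :=
    (Polynomial.finite_setOf_isRoot hp).measure_zero _
  have hsub : Ioc (-1:ℝ) 1 ⊆ ({x : ℝ | ¬ (p.eval x) ^ 2 = 0} ∩ Ioc (-1:ℝ) 1)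
      ∪ {x : ℝ | p.IsRoot x} := by
    intro x hx
    by_cases hr : p.eval x = 0
    · exact Or.inr hr
    · exact Or.inl ⟨pow_ne_zero _ hr, hx⟩
  have hle : volume (Ioc (-1:ℝ) 1) ≤ volume ({x : ℝ | ¬ (p.eval x) ^ 2 = 0} ∩ Ioc (-1:ℝ) 1)
      + volume {x : ℝ | p.IsRoot x} := (measure_mono hsub).trans (measure_union_le _ _)
  rw [hmeas0, hroots, Real.volume_Ioc] at hle
  simp only [add_zero, nonpos_iff_eq_zero, ENNReal.ofReal_eq_zero] at hle
  norm_num at hle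

/-- Uniqueness for the fully spectral (Petrov–)Galerkin–collocation scheme with
vacuum boundary conditions: if `ψ(x,μ) = Σ_{j=0}^M c_j(x) μ^j` with polynomial
coefficients of degree ≤ N vanishes at the inflow boundary for each discrete
direction and satisfies the homogeneous discrete transport equations against
all admissible test polynomials, then `ψ ≡ 0` on `[-1,1] × [-1,1]`. -/
theorem fully_discrete_uniqueness (M N : ℕ) (μ ω : Fin (M + 1) → ℝ)
    (hμ : ∀ m, μ m ∈ Ioo (-1 : ℝ) 1) (hμinj : Function.Injective μ)
    (hω : ∀ m, 0 < ω m)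
    (hquad : ∀ p : Polynomial ℝ, p.degree ≤ (2 * M + 1 : ℕ) →
      ∑ m, ω m * p.eval (μ m) = ∫ x in (-1 : ℝ)..1, p.eval x)
    (c : ℝ) (hc : 0 < c)
    (St : ℝ → ℝ → ℝ)
    (hSt : ContinuousOn (fun q : ℝ × ℝ => St q.1 q.2)
      (Icc (-1 : ℝ) 1 ×ˢ Icc (-1 : ℝ) 1))
    (Ss : ℝ → ℝ → ℝ → ℝ)
    (hSs : ContinuousOn (fun q : ℝ × ℝ × ℝ => Ss q.1 q.2.1 q.2.2)
      (Icc (-1 : ℝ) 1 ×ˢ Icc (-1 : ℝ) 1 ×ˢ Icc (-1 : ℝ) 1))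
    (hSs0 : ∀ x ∈ Icc (-1 : ℝ) 1, ∀ ν ∈ Icc (-1 : ℝ) 1, ∀ μ' ∈ Icc (-1 : ℝ) 1,
      0 ≤ Ss x ν μ')
    (hsub1 : ∀ x ∈ Icc (-1 : ℝ) 1, ∀ m,
      St x (μ m) - (1 / 2) * ∑ i, ω i * Ss x (μ i) (μ m) ≥ c / 2)
    (hsub2 : ∀ x ∈ Icc (-1 : ℝ) 1, ∀ i,
      St x (μ i) - (1 / 2) * ∑ m, ω m * Ss x (μ i) (μ m) ≥ c / 2)
    (cf : Fin (M + 1) → Polynomial ℝ) (hdeg : ∀ j, (cf j).degree ≤ N)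
    (hbcl : ∀ m, 0 < μ m → ∑ j, (cf j).eval (-1) * μ m ^ (j : ℕ) = 0)
    (hbcr : ∀ m, μ m < 0 → ∑ j, (cf j).eval 1 * μ m ^ (j : ℕ) = 0)
    (hgal : ∀ m, ∀ v : Polynomial ℝ, v.degree ≤ N →
      (0 < μ m → v.eval (-1) = 0) → (μ m < 0 → v.eval 1 = 0) →
      ∫ x in (-1 : ℝ)..1,
          (μ m * (∑ j, (derivative (cf j)).eval x * μ m ^ (j : ℕ))
            + St x (μ m) * (∑ j, (cf j).eval x * μ m ^ (j : ℕ))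
            - (1 / 2) * ∑ i, ω i * Ss x (μ i) (μ m)
                * (∑ j, (cf j).eval x * μ i ^ (j : ℕ))) * v.eval x = 0) :
    ∀ x ∈ Icc (-1 : ℝ) 1, ∀ ν ∈ Icc (-1 : ℝ) 1,
      ∑ j, (cf j).eval x * ν ^ (j : ℕ) = 0 := by
  classical
  -- the collocation polynomials ψ_m
  set P : Fin (M + 1) → Polynomial ℝ := fun m => ∑ j : Fin (M + 1), (μ m ^ (j : ℕ)) • cf j with hPdef
  have hPeval : ∀ m y, eval y (P m) = ∑ j, (cf j).eval y * μ m ^ (j : ℕ) := by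
    intro m y
    rw [hPdef]
    rw [Polynomial.eval_finset_sum]
    exact Finset.sum_congr rfl fun j _ => by rw [Polynomial.eval_smul, smul_eq_mul, mul_comm]
  have hPderiv : ∀ m y, eval y (derivative (P m))
      = ∑ j, (derivative (cf j)).eval y * μ m ^ (j : ℕ) := by
    intro m y
    have : derivative (P m) = ∑ j : Fin (M + 1), (μ m ^ (j : ℕ)) • derivative (cf j) := by
      rw [hPdef]
      rw [Polynomial.derivative_sum]
      exact Finset.sum_congr rfl fun j _ => Polynomial.derivative_smul _ _
    rw [this, Polynomial.eval_finset_sum]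
    exact Finset.sum_congr rfl fun j _ => by rw [Polynomial.eval_smul, smul_eq_mul, mul_comm]
  have hPdeg : ∀ m, (P m).degree ≤ (N : ℕ) := by
    intro m
    refine (Polynomial.degree_sum_le _ _).trans (Finset.sup_le fun j _ => ?_)
    exact (Polynomial.degree_smul_le _ _).trans (hdeg j)
  have hPbl : ∀ m, 0 < μ m → eval (-1) (P m) = 0 := fun m h => by
    rw [hPeval]; exact hbcl m h
  have hPbr : ∀ m, μ m < 0 → eval 1 (P m) = 0 := fun m h => by
    rw [hPeval]; exact hbcr m h
  have huIcc : uIcc (-1 : ℝ) 1 = Icc (-1 : ℝ) 1 := uIcc_of_le (by norm_num)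
  -- continuity of the coefficient functions
  have hStc : ∀ m, ContinuousOn (fun y => St y (μ m)) (Icc (-1 : ℝ) 1) := by
    intro m
    have hmap : ContinuousOn (fun y : ℝ => (y, μ m)) (Icc (-1 : ℝ) 1) :=
      (continuous_id.prodMk continuous_const).continuousOn
    exact hSt.comp hmap fun y hy => ⟨hy, Ioo_subset_Icc_self (hμ m)⟩
  have hSsc : ∀ i m, ContinuousOn (fun y => Ss y (μ i) (μ m)) (Icc (-1 : ℝ) 1) := by
    intro i m
    have hmap : ContinuousOn (fun y : ℝ => (y, (μ i, μ m))) (Icc (-1 : ℝ) 1) :=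
      (continuous_id.prodMk continuous_const).continuousOn
    exact hSs.comp hmap fun y hy => ⟨hy, Ioo_subset_Icc_self (hμ i), Ioo_subset_Icc_self (hμ m)⟩
  -- the "reaction" part of the integrand
  have hgc : ∀ m, ContinuousOn (fun y =>
      St y (μ m) * (eval y (P m)) ^ 2
        - (1 / 2) * ∑ i, ω i * Ss y (μ i) (μ m) * eval y (P i) * eval y (P m))
      (Icc (-1 : ℝ) 1) := by
    intro m
    refine ContinuousOn.sub ((hStc m).mul (((P m).continuous.pow 2).continuousOn)) ?_
    refine continuousOn_const.mul ?_
    refine fd_contOn_sum _ _ _ fun i _ => ?_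
    exact (((continuousOn_const.mul (hSsc i m)).mul ((P i).continuous.continuousOn)).mul
      ((P m).continuous.continuousOn))
  have hIg : ∀ m, IntervalIntegrable (fun y =>
      St y (μ m) * (eval y (P m)) ^ 2
        - (1 / 2) * ∑ i, ω i * Ss y (μ i) (μ m) * eval y (P i) * eval y (P m))
      volume (-1) 1 := by
    intro m
    exact ((hgc m).mono (by rw [huIcc])).intervalIntegrable
  have hIf1 : ∀ m, IntervalIntegrable
      (fun y => μ m * eval y (derivative (P m)) * eval y (P m)) volume (-1) 1 := by
    intro m
    exact ((continuous_const.mul (derivative (P m)).continuous).mul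
      (P m).continuous).intervalIntegrable _ _
  have hIp : ∀ m, IntervalIntegrable (fun y => (eval y (P m)) ^ 2) volume (-1) 1 :=
    fun m => ((P m).continuous.pow 2).intervalIntegrable _ _
  -- fundamental theorem of calculus for the streaming term
  have hFTC : ∀ m, ∫ y in (-1:ℝ)..1, μ m * eval y (derivative (P m)) * eval y (P m)
      = μ m / 2 * (eval 1 (P m)) ^ 2 - μ m / 2 * (eval (-1) (P m)) ^ 2 := by
    intro m
    have hd : ∀ y ∈ uIcc (-1 : ℝ) 1,
        HasDerivAt (fun y => μ m / 2 * (eval y (P m)) ^ 2)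
          (μ m * eval y (derivative (P m)) * eval y (P m)) y := by
      intro y _
      have h := (P m).hasDerivAt y
      have h2 := (h.pow 2).const_mul (μ m / 2)
      refine h2.congr_deriv ?_
      push_cast
      ring
    have := intervalIntegral.integral_eq_sub_of_hasDerivAt hd (hIf1 m)
    simpa using this
  -- the boundary term is nonnegative
  have hB : ∀ m, 0 ≤ μ m / 2 * (eval 1 (P m)) ^ 2 - μ m / 2 * (eval (-1) (P m)) ^ 2 := by
    intro m
    rcases lt_trichotomy (μ m) 0 with h | h | h
    · rw [hPbr m h]
      nlinarith [sq_nonneg (eval (-1) (P m))]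
    · rw [h]; ring_nf; exact le_refl 0
    · rw [hPbl m h]
      nlinarith [sq_nonneg (eval 1 (P m))]
  -- Galerkin equation with test function ψ_m
  have hgal' : ∀ m,
      (∫ y in (-1:ℝ)..1, μ m * eval y (derivative (P m)) * eval y (P m))
      + (∫ y in (-1:ℝ)..1, St y (μ m) * (eval y (P m)) ^ 2
          - (1 / 2) * ∑ i, ω i * Ss y (μ i) (μ m) * eval y (P i) * eval y (P m)) = 0 := by
    intro m
    have h0 := hgal m (P m) (hPdeg m) (hPbl m) (hPbr m)
    have heq : EqOn (fun y =>
        (μ m * (∑ j, (derivative (cf j)).eval y * μ m ^ (j : ℕ))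
          + St y (μ m) * (∑ j, (cf j).eval y * μ m ^ (j : ℕ))
          - (1 / 2) * ∑ i, ω i * Ss y (μ i) (μ m)
              * (∑ j, (cf j).eval y * μ i ^ (j : ℕ))) * (P m).eval y)
        (fun y => μ m * eval y (derivative (P m)) * eval y (P m)
          + (St y (μ m) * (eval y (P m)) ^ 2
            - (1 / 2) * ∑ i, ω i * Ss y (μ i) (μ m) * eval y (P i) * eval y (P m)))
        (uIcc (-1 : ℝ) 1) := by
      intro y _
      simp only
      have e : ∀ i : Fin (M + 1),
          (∑ j, (cf j).eval y * μ i ^ (j : ℕ)) = eval y (P i) := fun i => (hPeval i y).symm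
      have ed : (∑ j, (derivative (cf j)).eval y * μ m ^ (j : ℕ))
          = eval y (derivative (P m)) := (hPderiv m y).symm
      rw [ed]
      simp only [e]
      rw [sub_mul, add_mul, mul_assoc (1 / 2 : ℝ), Finset.sum_mul]
      ring
    rw [intervalIntegral.integral_congr heq,
      intervalIntegral.integral_add (hIf1 m) (hIg m)] at h0
    exact h0
  -- each reaction integral is nonpositive
  have hgle : ∀ m, (∫ y in (-1:ℝ)..1, St y (μ m) * (eval y (P m)) ^ 2
      - (1 / 2) * ∑ i, ω i * Ss y (μ i) (μ m) * eval y (P i) * eval y (P m)) ≤ 0 := by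
    intro m
    have h1 := hgal' m
    have h2 := hFTC m
    have h3 := hB m
    linarith
  -- pointwise coercivity
  have hptw : ∀ y ∈ Icc (-1 : ℝ) 1,
      c / 2 * ∑ m, ω m * (eval y (P m)) ^ 2
        ≤ ∑ m, ω m * (St y (μ m) * (eval y (P m)) ^ 2
            - (1 / 2) * ∑ i, ω i * Ss y (μ i) (μ m) * eval y (P i) * eval y (P m)) := by
    intro y hy
    exact fd_key ω hω (fun i m => Ss y (μ i) (μ m))
      (fun i m => hSs0 y hy _ (Ioo_subset_Icc_self (hμ i)) _ (Ioo_subset_Icc_self (hμ m)))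
      (fun m => St y (μ m)) c (fun m => hsub1 y hy m) (fun i => hsub2 y hy i)
      (fun m => eval y (P m))
  -- integrate the coercivity estimate
  have hIA : IntervalIntegrable (fun y => ∑ m, ω m * (St y (μ m) * (eval y (P m)) ^ 2
      - (1 / 2) * ∑ i, ω i * Ss y (μ i) (μ m) * eval y (P i) * eval y (P m)))
      volume (-1) 1 := by
    have := IntervalIntegrable.sum (μ := volume) (a := (-1:ℝ)) (b := 1) Finset.univ
      (f := fun m => fun y => ω m * (St y (μ m) * (eval y (P m)) ^ 2
        - (1 / 2) * ∑ i, ω i * Ss y (μ i) (μ m) * eval y (P i) * eval y (P m)))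
      (fun m _ => (hIg m).const_mul (ω m))
    simpa only [Finset.sum_fn] using this
  have hIB : IntervalIntegrable (fun y => c / 2 * ∑ m, ω m * (eval y (P m)) ^ 2)
      volume (-1) 1 := by
    have := IntervalIntegrable.sum (μ := volume) (a := (-1:ℝ)) (b := 1) Finset.univ
      (f := fun m => fun y => ω m * (eval y (P m)) ^ 2)
      (fun m _ => (hIp m).const_mul (ω m))
    have h2 : IntervalIntegrable (fun y => ∑ m, ω m * (eval y (P m)) ^ 2) volume (-1) 1 := by
      simpa only [Finset.sum_fn] using this
    exact h2.const_mul _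
  have hnn : 0 ≤ ∫ y in (-1:ℝ)..1,
      ((∑ m, ω m * (St y (μ m) * (eval y (P m)) ^ 2
          - (1 / 2) * ∑ i, ω i * Ss y (μ i) (μ m) * eval y (P i) * eval y (P m)))
        - c / 2 * ∑ m, ω m * (eval y (P m)) ^ 2) := by
    refine intervalIntegral.integral_nonneg (by norm_num) fun u hu => ?_
    exact sub_nonneg.mpr (hptw u hu)
  rw [intervalIntegral.integral_sub hIA hIB] at hnn
  have hsplitA : (∫ y in (-1:ℝ)..1, ∑ m, ω m * (St y (μ m) * (eval y (P m)) ^ 2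
      - (1 / 2) * ∑ i, ω i * Ss y (μ i) (μ m) * eval y (P i) * eval y (P m)))
      = ∑ m, ω m * ∫ y in (-1:ℝ)..1, (St y (μ m) * (eval y (P m)) ^ 2
        - (1 / 2) * ∑ i, ω i * Ss y (μ i) (μ m) * eval y (P i) * eval y (P m)) := by
    rw [intervalIntegral.integral_finset_sum (fun m _ => (hIg m).const_mul (ω m))]
    exact Finset.sum_congr rfl fun m _ => intervalIntegral.integral_const_mul _ _
  have hsplitB : (∫ y in (-1:ℝ)..1, c / 2 * ∑ m, ω m * (eval y (P m)) ^ 2)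
      = c / 2 * ∑ m, ω m * ∫ y in (-1:ℝ)..1, (eval y (P m)) ^ 2 := by
    rw [intervalIntegral.integral_const_mul]
    congr 1
    rw [intervalIntegral.integral_finset_sum (fun m _ => (hIp m).const_mul (ω m))]
    exact Finset.sum_congr rfl fun m _ => intervalIntegral.integral_const_mul _ _
  rw [hsplitA, hsplitB] at hnn
  -- conclusion: each ∫ ψ_m² = 0
  have hgsum : ∑ m, ω m * (∫ y in (-1:ℝ)..1, (St y (μ m) * (eval y (P m)) ^ 2
      - (1 / 2) * ∑ i, ω i * Ss y (μ i) (μ m) * eval y (P i) * eval y (P m))) ≤ 0 :=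
    Finset.sum_nonpos fun m _ => mul_nonpos_iff.mpr (Or.inl ⟨(hω m).le, hgle m⟩)
  have hJle : ∑ m, ω m * (∫ y in (-1:ℝ)..1, (eval y (P m)) ^ 2) ≤ 0 := by
    have hcJ : c / 2 * (∑ m, ω m * (∫ y in (-1:ℝ)..1, (eval y (P m)) ^ 2)) ≤ 0 := by
      linarith
    nlinarith [half_pos hc]
  have hterm : ∀ m, 0 ≤ ω m * ∫ y in (-1:ℝ)..1, (eval y (P m)) ^ 2 := fun m =>
    mul_nonneg (hω m).le (intervalIntegral.integral_nonneg (by norm_num)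
      fun u _ => sq_nonneg _)
  have hJ0 : ∑ m, ω m * (∫ y in (-1:ℝ)..1, (eval y (P m)) ^ 2) = 0 :=
    le_antisymm hJle (Finset.sum_nonneg fun m _ => hterm m)
  have hint0 : ∀ m, (∫ y in (-1:ℝ)..1, (eval y (P m)) ^ 2) = 0 := by
    intro m
    have := (Finset.sum_eq_zero_iff_of_nonneg (fun m _ => hterm m)).mp hJ0 m (Finset.mem_univ m)
    exact (mul_eq_zero.mp this).resolve_left (hω m).ne'
  have hP0 : ∀ m, P m = 0 := fun m => fd_poly_eq_zero _ (hint0 m)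
  -- final Vandermonde argument
  intro x hx ν hν
  have hv : ∀ m, ∑ j, (cf j).eval x * μ m ^ (j : ℕ) = 0 := by
    intro m
    rw [← hPeval m x, hP0 m]
    simp
  have hz := Matrix.eq_zero_of_forall_index_sum_mul_pow_eq_zero hμinj
    (v := fun j => (cf j).eval x) hv
  refine Finset.sum_eq_zero fun j _ => ?_
  rw [show (cf j).eval x = 0 from congrFun hz j]
  ring
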